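/- For a simple, strongly connected, finite weighted directed graph and distinct vertices x, y, the function ε ↦ κ_ε(x,y) := 1 − W(ν^ε_x, ν^ε_y)/d(x,y) is concave on [0,1], and consequently κ_ε(x,y)/ε is non-increasing in ε ∈ (0,1]. -/

import Mathlib

open Finset Filter Topology MeasureTheory
open scoped Classical

noncomputable section

variable {V : Type*}

/-- Vertex weight `μ(x) = Σ_y μ_{xy}`. -/
def vdeg [Fintype V] (μ : V → V → ℝ) (x : V) : ℝ := ∑ y, μ x y

/-- Transition probability kernel `P(x,y) = μ_{xy}/μ(x)`. -/
def transP [Fintype V] (μ : V → V → ℝ) (x y : V) : ℝ := μ x y / vdeg μ x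

/-- `m` is the Perron measure of `(V,μ)`. -/
def IsPerron [Fintype V] (μ : V → V → ℝ) (m : V → ℝ) : Prop :=
  (∀ x, 0 < m x) ∧ (∑ x, m x = 1) ∧ ∀ x, m x = ∑ y, m y * transP μ y x

/-- Mean transition probability kernel `𝒫 = (P + ←P)/2`. -/
def meanK [Fintype V] (μ : V → V → ℝ) (m : V → ℝ) (x y : V) : ℝ :=
  (transP μ x y + m y / m x * transP μ y x) / 2

/-- There is a directed path of length `n` from `x` to `y`. -/
def HasPathLen (μ : V → V → ℝ) (x y : V) (n : ℕ) : Prop :=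
  ∃ c : ℕ → V, c 0 = x ∧ c n = y ∧ ∀ i < n, 0 < μ (c i) (c (i + 1))

/-- The (non-symmetric) graph distance. -/
def gdist (μ : V → V → ℝ) (x y : V) : ℝ :=
  sInf {r : ℝ | ∃ n : ℕ, (r : ℝ) = (n : ℝ) ∧ HasPathLen μ x y n}

/-- The graph is simple: no loops. -/
def IsSimpleW (μ : V → V → ℝ) : Prop := ∀ x, μ x x = 0

/-- The edge weight is nonnegative. -/
def Nonneg (μ : V → V → ℝ) : Prop := ∀ x y, 0 ≤ μ x y

/-- The graph is strongly connected. -/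
def StronglyConnectedW (μ : V → V → ℝ) : Prop := ∀ x y, ∃ n, HasPathLen μ x y n

/-- `π` is a coupling of the probability measures `ν₀, ν₁`. -/
def IsCoupling [Fintype V] (π : V → V → ℝ) (ν₀ ν₁ : V → ℝ) : Prop :=
  (∀ x y, 0 ≤ π x y) ∧ (∀ x, ∑ y, π x y = ν₀ x) ∧ (∀ y, ∑ x, π x y = ν₁ y)

/-- The L¹-Wasserstein distance with cost `d`. -/
def Wass [Fintype V] (d : V → V → ℝ) (ν₀ ν₁ : V → ℝ) : ℝ :=
  sInf {c : ℝ | ∃ π, IsCoupling π ν₀ ν₁ ∧ c = ∑ x, ∑ y, d x y * π x y}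

/-- The probability measure `ν^ε_x`. -/
def nu [Fintype V] (P : V → V → ℝ) (ε : ℝ) (x z : V) : ℝ :=
  if z = x then 1 - ε else ε * P x z

/-- `κ_ε(x,y) = 1 − W(ν^ε_x, ν^ε_y)/d(x,y)`. -/
def kappaEps [Fintype V] (μ : V → V → ℝ) (m : V → ℝ) (ε : ℝ) (x y : V) : ℝ :=
  1 - Wass (gdist μ) (nu (meanK μ m) ε x) (nu (meanK μ m) ε y) / gdist μ x y

/-- The (positive) Chung Laplacian associated with a kernel `P`. -/
def chungL [Fintype V] (P : V → V → ℝ) (f : V → ℝ) (x : V) : ℝ :=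
  f x - ∑ y, P x y * f y

/-- The negative Laplacian `Δ = −ℒ`. -/
def negL [Fintype V] (P : V → V → ℝ) (f : V → ℝ) (x : V) : ℝ :=
  (∑ y, P x y * f y) - f x

/-- `f` is 1-Lipschitz with respect to the non-symmetric distance `d`. -/
def Lip1 (d : V → V → ℝ) (f : V → ℝ) : Prop := ∀ x y, f y - f x ≤ d x y

/-- The asymptotic mean curvature `ℋ_x = ℒρ_x(x)`. -/
def Hout [Fintype V] (μ : V → V → ℝ) (m : V → ℝ) (x : V) : ℝ :=
  chungL (meanK μ m) (fun y => gdist μ x y) x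

/-- The reverse asymptotic mean curvature `←ℋ_x = ℒ←ρ_x(x)`. -/
def Hin [Fintype V] (μ : V → V → ℝ) (m : V → ℝ) (x : V) : ℝ :=
  chungL (meanK μ m) (fun y => gdist μ y x) x

/-- The mixed asymptotic mean curvature `ℋ(x,y) = −(ℋ_x + ←ℋ_y)`. -/
def Hmix [Fintype V] (μ : V → V → ℝ) (m : V → ℝ) (x y : V) : ℝ :=
  -(Hout μ m x + Hin μ m y)

/-- The neighborhood `𝒩_x = N_x ∪ ←N_x`. -/
def nbr [Fintype V] (μ : V → V → ℝ) (x : V) : Finset V :=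
  Finset.univ.filter (fun y => 0 < μ x y ∨ 0 < μ y x)

section Aux

variable [Fintype V]

lemma gdist_nonneg' (μ : V → V → ℝ) (a b : V) : 0 ≤ gdist μ a b := by
  apply Real.sInf_nonneg
  rintro r ⟨n, rfl, -⟩
  positivity

lemma one_le_gdist' {μ : V → V → ℝ} (hconn : StronglyConnectedW μ) {a b : V} (hab : a ≠ b) :
    1 ≤ gdist μ a b := by
  obtain ⟨n, hn⟩ := hconn a b
  have hlb : ∀ r ∈ {r : ℝ | ∃ n : ℕ, r = (n : ℝ) ∧ HasPathLen μ a b n}, (1 : ℝ) ≤ r := by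
    rintro r ⟨k, rfl, c, hc0, hck, -⟩
    have hk : k ≠ 0 := by rintro rfl; exact hab (by rw [← hc0, ← hck])
    exact_mod_cast Nat.one_le_iff_ne_zero.2 hk
  exact le_csInf ⟨(n : ℝ), ⟨n, rfl, hn⟩⟩ hlb

lemma vdeg_pos' {μ : V → V → ℝ} (hnn : Nonneg μ) (hconn : StronglyConnectedW μ)
    {x y : V} (hxy : x ≠ y) (v : V) : 0 < vdeg μ v := by
  obtain ⟨w, hw⟩ : ∃ w, w ≠ v := by
    by_cases h : v = x
    · exact ⟨y, fun h' => hxy ((h'.trans h).symm)⟩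
    · exact ⟨x, fun h' => h h'.symm⟩
  obtain ⟨n, c, hc0, hcn, hstep⟩ := hconn v w
  have hn : n ≠ 0 := by rintro rfl; exact hw (by rw [← hcn, hc0])
  have h1 : 0 < μ v (c 1) := by
    have := hstep 0 (Nat.pos_of_ne_zero hn)
    rwa [hc0] at this
  exact Finset.sum_pos' (fun i _ => hnn v i) ⟨c 1, Finset.mem_univ _, h1⟩

lemma transP_sum' {μ : V → V → ℝ} {a : V} (ha : 0 < vdeg μ a) : ∑ b, transP μ a b = 1 := by
  unfold transP
  rw [← Finset.sum_div]
  exact div_self ha.ne'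

lemma meanK_nonneg' {μ : V → V → ℝ} {m : V → ℝ} (hnn : Nonneg μ) (hm : ∀ v, 0 < m v)
    (a b : V) : 0 ≤ meanK μ m a b := by
  unfold meanK transP vdeg
  have h1 : 0 ≤ μ a b / ∑ z, μ a z :=
    div_nonneg (hnn a b) (Finset.sum_nonneg fun z _ => hnn a z)
  have h2 : 0 ≤ μ b a / ∑ z, μ b z :=
    div_nonneg (hnn b a) (Finset.sum_nonneg fun z _ => hnn b z)
  have h3 : 0 ≤ m b / m a := div_nonneg (hm b).le (hm a).le
  positivity

lemma meanK_sum' {μ : V → V → ℝ} {m : V → ℝ} (hnn : Nonneg μ) (hconn : StronglyConnectedW μ)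
    {x y : V} (hxy : x ≠ y) (hm : IsPerron μ m) (a : V) : ∑ b, meanK μ m a b = 1 := by
  unfold meanK
  rw [← Finset.sum_div, Finset.sum_add_distrib]
  have h1 : ∑ b, transP μ a b = 1 := transP_sum' (vdeg_pos' hnn hconn hxy a)
  have h2 : ∑ b, m b / m a * transP μ b a = 1 := by
    have hma := hm.2.2 a
    have : ∑ b, m b / m a * transP μ b a = (∑ b, m b * transP μ b a) / m a := by
      rw [Finset.sum_div]
      exact Finset.sum_congr rfl fun b _ => by ring
    rw [this, ← hma]
    exact div_self (hm.1 a).ne'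
  rw [h1, h2]
  norm_num

lemma meanK_self' {μ : V → V → ℝ} {m : V → ℝ} (hsimple : IsSimpleW μ) (a : V) :
    meanK μ m a a = 0 := by
  unfold meanK transP
  rw [hsimple a]
  simp

lemma nu_sum' {P : V → V → ℝ} {a : V} (hP : ∑ z, P a z = 1) (hPa : P a a = 0) (ε : ℝ) :
    ∑ z, nu P ε a z = 1 := by
  have key : ∀ z, nu P ε a z = (if z = a then 1 - ε else 0) + ε * P a z := by
    intro z
    unfold nu
    by_cases h : z = a
    · subst h; simp [hPa]
    · simp [h]
  rw [Finset.sum_congr rfl fun z _ => key z, Finset.sum_add_distrib, ← Finset.mul_sum, hP]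
  simp

lemma nu_nonneg' {P : V → V → ℝ} (hP : ∀ a b, 0 ≤ P a b) {ε : ℝ} (h0 : 0 ≤ ε) (h1 : ε ≤ 1)
    (a z : V) : 0 ≤ nu P ε a z := by
  unfold nu
  split
  · linarith
  · exact mul_nonneg h0 (hP a z)

lemma prod_coupling' {ν₀ ν₁ : V → ℝ} (h0 : ∀ z, 0 ≤ ν₀ z) (h1 : ∀ z, 0 ≤ ν₁ z)
    (s0 : ∑ z, ν₀ z = 1) (s1 : ∑ z, ν₁ z = 1) :
    IsCoupling (fun a b => ν₀ a * ν₁ b) ν₀ ν₁ := by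
  refine ⟨fun a b => mul_nonneg (h0 a) (h1 b), fun a => ?_, fun b => ?_⟩
  · rw [← Finset.mul_sum, s1, mul_one]
  · rw [← Finset.sum_mul, s0, one_mul]

lemma wassSet_bddBelow' {d : V → V → ℝ} (hd : ∀ a b, 0 ≤ d a b) (ν₀ ν₁ : V → ℝ) :
    BddBelow {c : ℝ | ∃ π, IsCoupling π ν₀ ν₁ ∧ c = ∑ x, ∑ y, d x y * π x y} := by
  refine ⟨0, ?_⟩
  rintro c ⟨π, hπ, rfl⟩
  exact Finset.sum_nonneg fun a _ => Finset.sum_nonneg fun b _ =>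
    mul_nonneg (hd a b) (hπ.1 a b)

lemma nu_affine' (P : V → V → ℝ) (ε₀ ε₁ t : ℝ) (a z : V) :
    nu P ((1 - t) * ε₀ + t * ε₁) a z = (1 - t) * nu P ε₀ a z + t * nu P ε₁ a z := by
  unfold nu
  by_cases h : z = a <;> simp [h] <;> ring

lemma comb_coupling' {π₀ π₁ : V → V → ℝ} {ν₀ ν₀' ν₁ ν₁' : V → ℝ} {t : ℝ}
    (ht0 : 0 ≤ t) (ht1 : t ≤ 1)
    (h0 : IsCoupling π₀ ν₀ ν₁) (h1 : IsCoupling π₁ ν₀' ν₁') :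
    IsCoupling (fun a b => (1 - t) * π₀ a b + t * π₁ a b)
      (fun z => (1 - t) * ν₀ z + t * ν₀' z) (fun z => (1 - t) * ν₁ z + t * ν₁' z) := by
  refine ⟨fun a b => add_nonneg (mul_nonneg (by linarith) (h0.1 a b))
      (mul_nonneg ht0 (h1.1 a b)), fun a => ?_, fun b => ?_⟩
  · rw [Finset.sum_add_distrib, ← Finset.mul_sum, ← Finset.mul_sum, h0.2.1 a, h1.2.1 a]
  · rw [Finset.sum_add_distrib, ← Finset.mul_sum, ← Finset.mul_sum, h0.2.2 b, h1.2.2 b]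

lemma comb_cost' (d : V → V → ℝ) (π₀ π₁ : V → V → ℝ) (t : ℝ) :
    ∑ a, ∑ b, d a b * ((1 - t) * π₀ a b + t * π₁ a b)
      = (1 - t) * (∑ a, ∑ b, d a b * π₀ a b) + t * (∑ a, ∑ b, d a b * π₁ a b) := by
  rw [Finset.mul_sum, Finset.mul_sum, ← Finset.sum_add_distrib]
  refine Finset.sum_congr rfl fun a _ => ?_
  rw [Finset.mul_sum, Finset.mul_sum, ← Finset.sum_add_distrib]
  exact Finset.sum_congr rfl fun b _ => by ring

lemma le_add_all' {a b : ℝ} (h : ∀ δ : ℝ, 0 < δ → a ≤ b + δ) : a ≤ b := by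
  by_contra hc
  push_neg at hc
  have := h ((a - b) / 2) (by linarith)
  linarith

lemma wass_convex' {d : V → V → ℝ} (hd : ∀ a b, 0 ≤ d a b)
    {ν₀ ν₀' ν₁ ν₁' : V → ℝ}
    (hne₀ : ∃ π, IsCoupling π ν₀ ν₁) (hne₁ : ∃ π, IsCoupling π ν₀' ν₁')
    {t : ℝ} (ht0 : 0 ≤ t) (ht1 : t ≤ 1) :
    Wass d (fun z => (1 - t) * ν₀ z + t * ν₀' z) (fun z => (1 - t) * ν₁ z + t * ν₁' z)
      ≤ (1 - t) * Wass d ν₀ ν₁ + t * Wass d ν₀' ν₁' := by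
  have hS0ne : {c : ℝ | ∃ π, IsCoupling π ν₀ ν₁ ∧ c = ∑ x, ∑ y, d x y * π x y}.Nonempty := by
    obtain ⟨π, hπ⟩ := hne₀; exact ⟨_, π, hπ, rfl⟩
  have hS1ne : {c : ℝ | ∃ π, IsCoupling π ν₀' ν₁' ∧ c = ∑ x, ∑ y, d x y * π x y}.Nonempty := by
    obtain ⟨π, hπ⟩ := hne₁; exact ⟨_, π, hπ, rfl⟩
  apply le_add_all'
  intro δ hδ
  obtain ⟨c₀, hc0S, hc₀⟩ := Real.lt_sInf_add_pos hS0ne hδ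
  obtain ⟨c₁, hc1S, hc₁⟩ := Real.lt_sInf_add_pos hS1ne hδ
  obtain ⟨π₀, hπ₀, rfl⟩ := hc0S
  obtain ⟨π₁, hπ₁, rfl⟩ := hc1S
  have hc₀' : (∑ a, ∑ b, d a b * π₀ a b) < Wass d ν₀ ν₁ + δ := hc₀
  have hc₁' : (∑ a, ∑ b, d a b * π₁ a b) < Wass d ν₀' ν₁' + δ := hc₁
  have hmem : (1 - t) * (∑ a, ∑ b, d a b * π₀ a b) + t * (∑ a, ∑ b, d a b * π₁ a b) ∈
      {c : ℝ | ∃ π, IsCoupling π (fun z => (1 - t) * ν₀ z + t * ν₀' z)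
        (fun z => (1 - t) * ν₁ z + t * ν₁' z) ∧ c = ∑ x, ∑ y, d x y * π x y} :=
    ⟨_, comb_coupling' ht0 ht1 hπ₀ hπ₁, (comb_cost' d π₀ π₁ t).symm⟩
  have hle : Wass d (fun z => (1 - t) * ν₀ z + t * ν₀' z)
      (fun z => (1 - t) * ν₁ z + t * ν₁' z)
      ≤ (1 - t) * (∑ a, ∑ b, d a b * π₀ a b) + t * (∑ a, ∑ b, d a b * π₁ a b) :=
    csInf_le (wassSet_bddBelow' hd _ _) hmem
  have h0' : (1 - t) * (∑ a, ∑ b, d a b * π₀ a b) ≤ (1 - t) * (Wass d ν₀ ν₁ + δ) :=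
    mul_le_mul_of_nonneg_left hc₀'.le (by linarith)
  have h1' : t * (∑ a, ∑ b, d a b * π₁ a b) ≤ t * (Wass d ν₀' ν₁' + δ) :=
    mul_le_mul_of_nonneg_left hc₁'.le ht0
  have heq : (1 - t) * (Wass d ν₀ ν₁ + δ) + t * (Wass d ν₀' ν₁' + δ)
      = (1 - t) * Wass d ν₀ ν₁ + t * Wass d ν₀' ν₁' + δ := by ring
  linarith

end Aux

/-- concavity of `ε ↦ κ_ε(x,y)` and monotonicity of `κ_ε(x,y)/ε`. -/
theorem kappaEps_concave_and_div_antitone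
    {V : Type*} [Fintype V] (μ : V → V → ℝ) (m : V → ℝ)
    (hnn : Nonneg μ) (hsimple : IsSimpleW μ) (hconn : StronglyConnectedW μ)
    (hm : IsPerron μ m) (x y : V) (hxy : x ≠ y) :
    (∀ ε₀ ε₁ t : ℝ, ε₀ ∈ Set.Icc (0:ℝ) 1 → ε₁ ∈ Set.Icc (0:ℝ) 1 →
        t ∈ Set.Icc (0:ℝ) 1 →
        (1 - t) * kappaEps μ m ε₀ x y + t * kappaEps μ m ε₁ x y
          ≤ kappaEps μ m ((1 - t) * ε₀ + t * ε₁) x y) ∧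
    (∀ ε ε' : ℝ, 0 < ε → ε ≤ ε' → ε' ≤ 1 →
        kappaEps μ m ε' x y / ε' ≤ kappaEps μ m ε x y / ε) := by
  have hPnn : ∀ a b, 0 ≤ meanK μ m a b := meanK_nonneg' hnn hm.1
  have hPsum : ∀ a, ∑ b, meanK μ m a b = 1 := meanK_sum' hnn hconn hxy hm
  have hPself : ∀ a, meanK μ m a a = 0 := meanK_self' hsimple
  have hdnn : ∀ a b, 0 ≤ gdist μ a b := gdist_nonneg' μ
  have hDpos : 0 < gdist μ x y := lt_of_lt_of_le one_pos (one_le_gdist' hconn hxy)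
  have hne : ∀ ε : ℝ, 0 ≤ ε → ε ≤ 1 →
      ∃ π, IsCoupling π (nu (meanK μ m) ε x) (nu (meanK μ m) ε y) :=
    fun ε h0 h1 => ⟨_, prod_coupling' (nu_nonneg' hPnn h0 h1 x) (nu_nonneg' hPnn h0 h1 y)
      (nu_sum' (hPsum x) (hPself x) ε) (nu_sum' (hPsum y) (hPself y) ε)⟩
  have hconc : ∀ ε₀ ε₁ t : ℝ, ε₀ ∈ Set.Icc (0:ℝ) 1 → ε₁ ∈ Set.Icc (0:ℝ) 1 →
      t ∈ Set.Icc (0:ℝ) 1 →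
      (1 - t) * kappaEps μ m ε₀ x y + t * kappaEps μ m ε₁ x y
        ≤ kappaEps μ m ((1 - t) * ε₀ + t * ε₁) x y := by
    intro ε₀ ε₁ t h0 h1 ht
    have hW := wass_convex' (d := gdist μ) hdnn (hne ε₀ h0.1 h0.2) (hne ε₁ h1.1 h1.2) ht.1 ht.2
    have ha : (fun z => (1 - t) * nu (meanK μ m) ε₀ x z + t * nu (meanK μ m) ε₁ x z)
        = nu (meanK μ m) ((1 - t) * ε₀ + t * ε₁) x :=
      funext fun z => (nu_affine' (meanK μ m) ε₀ ε₁ t x z).symm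
    have hb : (fun z => (1 - t) * nu (meanK μ m) ε₀ y z + t * nu (meanK μ m) ε₁ y z)
        = nu (meanK μ m) ((1 - t) * ε₀ + t * ε₁) y :=
      funext fun z => (nu_affine' (meanK μ m) ε₀ ε₁ t y z).symm
    rw [ha, hb] at hW
    unfold kappaEps
    set D := gdist μ x y with hD
    set W₀ := Wass (gdist μ) (nu (meanK μ m) ε₀ x) (nu (meanK μ m) ε₀ y) with hW₀
    set W₁ := Wass (gdist μ) (nu (meanK μ m) ε₁ x) (nu (meanK μ m) ε₁ y) with hW₁
    set Wt := Wass (gdist μ) (nu (meanK μ m) ((1 - t) * ε₀ + t * ε₁) x)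
      (nu (meanK μ m) ((1 - t) * ε₀ + t * ε₁) y) with hWt
    have h2 : Wt / D ≤ ((1 - t) * W₀ + t * W₁) / D := (div_le_div_iff_of_pos_right hDpos).mpr hW
    have h4 : (1 - t) * (1 - W₀ / D) + t * (1 - W₁ / D) = 1 - ((1 - t) * W₀ + t * W₁) / D := by
      ring
    rw [h4]
    linarith
  refine ⟨hconc, ?_⟩
  intro ε ε' hε hεε' hε'
  have hε'pos : 0 < ε' := lt_of_lt_of_le hε hεε'
  have hW0 : Wass (gdist μ) (nu (meanK μ m) 0 x) (nu (meanK μ m) 0 y) ≤ gdist μ x y := by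
    apply csInf_le (wassSet_bddBelow' hdnn _ _)
    refine ⟨fun a b => nu (meanK μ m) 0 x a * nu (meanK μ m) 0 y b,
      prod_coupling' (nu_nonneg' hPnn le_rfl zero_le_one x)
        (nu_nonneg' hPnn le_rfl zero_le_one y)
        (nu_sum' (hPsum x) (hPself x) 0) (nu_sum' (hPsum y) (hPself y) 0), ?_⟩
    have hx0 : ∀ a, nu (meanK μ m) 0 x a = if a = x then 1 else 0 := by
      intro a; unfold nu; split <;> simp
    have hy0 : ∀ b, nu (meanK μ m) 0 y b = if b = y then 1 else 0 := by
      intro b; unfold nu; split <;> simp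
    simp only [hx0, hy0, mul_ite, ite_mul, one_mul, mul_one, mul_zero, zero_mul]
    simp [Finset.sum_ite_eq']
  have hκ0 : 0 ≤ kappaEps μ m 0 x y := by
    unfold kappaEps
    have h5 : Wass (gdist μ) (nu (meanK μ m) 0 x) (nu (meanK μ m) 0 y) / gdist μ x y ≤ 1 :=
      (div_le_one hDpos).mpr hW0
    linarith
  set t := ε / ε' with htdef
  have ht0 : 0 ≤ t := div_nonneg hε.le hε'pos.le
  have ht1 : t ≤ 1 := div_le_one_of_le₀ hεε' hε'pos.le
  have harg : (1 - t) * 0 + t * ε' = ε := by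
    rw [htdef]; field_simp; ring
  have hkey : t * kappaEps μ m ε' x y ≤ kappaEps μ m ε x y := by
    have h1 := hconc 0 ε' t ⟨le_rfl, zero_le_one⟩ ⟨hε'pos.le, hε'⟩ ⟨ht0, ht1⟩
    rw [harg] at h1
    have h2 : 0 ≤ (1 - t) * kappaEps μ m 0 x y := mul_nonneg (by linarith) hκ0
    linarith
  rw [div_le_div_iff₀ hε'pos hε]
  calc kappaEps μ m ε' x y * ε = (t * kappaEps μ m ε' x y) * ε' := by
        rw [htdef]; field_simp
    _ ≤ kappaEps μ m ε x y * ε' := mul_le_mul_of_nonneg_right hkey hε'pos.le
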